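/- arXiv:1302.3498 — 5 statements merged into one kernel-verified Lean document; each statement's English description precedes it below -/
import Mathlib

section
/- A circulant graph G = C_n(D) is a CIS graph if and only if the following three conditions hold: every maximal stable set of G has size α(G), every maximal clique of G has size ω(G), and α(G)·ω(G) = n. -/
open SimpleGraph Finset

/-- The circulant graph `C_n(D)` on vertex set `ZMod n` with distance set
`D ⊆ {1, …, n-1}`: distinct vertices `i, j` are adjacent iff `(i - j) mod n ∈ D`. -/
def circulant (n : ℕ) (D : Finset ℕ) : SimpleGraph (ZMod n) :=
  SimpleGraph.fromRel (fun i j => (i - j).val ∈ D)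

/-- A graph is a CIS graph if every maximal clique and every maximal stable set
(equivalently, every maximal clique of the complement) intersect. -/
def SimpleGraph.IsCIS {V : Type*} (G : SimpleGraph V) : Prop :=
  ∀ C S : Set V, Maximal G.IsClique C → Maximal Gᶜ.IsClique S → (C ∩ S).Nonempty

/-- The distance set `{d ∈ {1,…,n-1} : a ∣ d ∧ a*b ∤ d}` of a pair `(a, b)`. -/
def pairedD (n a b : ℕ) : Finset ℕ :=
  (Finset.Icc 1 (n - 1)).filter (fun d => a ∣ d ∧ ¬ (a * b) ∣ d)

/-- The `k`-paired circulant `C(n; a_1,b_1; …; a_k,b_k)` (index type `ι`). -/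
def pairedCirculant (n : ℕ) {ι : Type*} [Fintype ι] (a b : ι → ℕ) : SimpleGraph (ZMod n) :=
  circulant n (Finset.univ.biUnion (fun i => pairedD n (a i) (b i)))

/-- The lexicographic product of two simple graphs. -/
def lexProd {α β : Type*} (G : SimpleGraph α) (H : SimpleGraph β) : SimpleGraph (α × β) where
  Adj p q := G.Adj p.1 q.1 ∨ (p.1 = q.1 ∧ H.Adj p.2 q.2)
  symm := by
    constructor
    intro p q h
    rcases h with h | ⟨h1, h2⟩
    · exact Or.inl h.symm
    · exact Or.inr ⟨h1.symm, h2.symm⟩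
  loopless := by
    constructor
    intro p h
    rcases h with h | ⟨_, h⟩
    · exact G.loopless.irrefl _ h
    · exact H.loopless.irrefl _ h

section Aux

set_option linter.unusedSectionVars false

variable {n : ℕ} [NeZero n]

lemma translate_isClique (H : SimpleGraph (ZMod n))
    (hinv : ∀ a b t : ZMod n, H.Adj (a + t) (b + t) ↔ H.Adj a b)
    {C : Set (ZMod n)} (hC : H.IsClique C) (t : ZMod n) :
    H.IsClique ((· + t) '' C) := by
  rintro x ⟨a, ha, rfl⟩ y ⟨b, hb, rfl⟩ hne
  have hab : a ≠ b := by rintro rfl; exact hne rfl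
  exact (hinv a b t).mpr (hC ha hb hab)

lemma translate_image_image (t : ZMod n) (s : Set (ZMod n)) :
    (· + t) '' ((· + (-t)) '' s) = s := by
  rw [Set.image_image]; simp

lemma translate_maximal (H : SimpleGraph (ZMod n))
    (hinv : ∀ a b t : ZMod n, H.Adj (a + t) (b + t) ↔ H.Adj a b)
    {C : Set (ZMod n)} (hC : Maximal H.IsClique C) (t : ZMod n) :
    Maximal H.IsClique ((· + t) '' C) := by
  refine ⟨translate_isClique H hinv hC.1 t, ?_⟩
  intro y hy hsub
  have h1 : H.IsClique ((· + (-t)) '' y) := translate_isClique H hinv hy (-t)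
  have h2 : C ⊆ (· + (-t)) '' y := by
    have := Set.image_mono (f := (· + (-t))) hsub
    rwa [Set.image_image, show (fun x => x + t + -t) = id by funext x; simp,
      Set.image_id] at this
  have h3 : (· + (-t)) '' y ⊆ C := hC.2 h1 h2
  have := Set.image_mono (f := (· + t)) h3
  rwa [translate_image_image] at this

lemma compl_inv (H : SimpleGraph (ZMod n))
    (hinv : ∀ a b t : ZMod n, H.Adj (a + t) (b + t) ↔ H.Adj a b) :
    ∀ a b t : ZMod n, Hᶜ.Adj (a + t) (b + t) ↔ Hᶜ.Adj a b := by
  intro a b t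
  simp [SimpleGraph.compl_adj, hinv a b t, add_left_inj]

lemma count_sum (C S : Finset (ZMod n)) :
    ∑ t : ZMod n, ((C.image (· + t)) ∩ S).card = C.card * S.card := by
  have h1 : ∀ t : ZMod n, (C.image (· + t)) ∩ S = S.filter (fun s => s - t ∈ C) := by
    intro t
    ext x
    simp only [Finset.mem_inter, Finset.mem_image, Finset.mem_filter]
    constructor
    · rintro ⟨⟨c, hc, rfl⟩, hx⟩
      exact ⟨hx, by simpa using hc⟩
    · rintro ⟨hx, hc⟩
      exact ⟨⟨x - t, hc, by rw [sub_add_cancel]⟩, hx⟩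
  calc ∑ t : ZMod n, ((C.image (· + t)) ∩ S).card
      = ∑ t : ZMod n, ∑ s ∈ S, if s - t ∈ C then 1 else 0 := by
        simp only [h1, Finset.card_filter]
    _ = ∑ s ∈ S, ∑ t : ZMod n, if s - t ∈ C then 1 else 0 := Finset.sum_comm
    _ = ∑ s ∈ S, C.card := by
        refine Finset.sum_congr rfl fun s _ => ?_
        rw [← Finset.card_filter]
        have hset : Finset.univ.filter (fun t => s - t ∈ C) = C.image (fun c => s - c) := by
          ext t
          simp only [Finset.mem_filter, Finset.mem_univ, true_and, Finset.mem_image]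
          constructor
          · intro h; exact ⟨s - t, h, by rw [sub_sub_cancel]⟩
          · rintro ⟨c, hc, rfl⟩; rwa [sub_sub_cancel]
        rw [hset, Finset.card_image_of_injective _ (fun a b h => by
          simpa using sub_right_injective h)]
    _ = S.card * C.card := by rw [Finset.sum_const, smul_eq_mul]
    _ = C.card * S.card := mul_comm _ _

lemma cliqueStable_card_le_one (H : SimpleGraph (ZMod n)) {C S : Finset (ZMod n)}
    (hC : H.IsClique (C : Set (ZMod n))) (hS : Hᶜ.IsClique (S : Set (ZMod n))) :
    (C ∩ S).card ≤ 1 := by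
  rw [Finset.card_le_one]
  intro a ha b hb
  by_contra hne
  have ha' := Finset.mem_inter.1 ha
  have hb' := Finset.mem_inter.1 hb
  have h1 : H.Adj a b := hC (Finset.mem_coe.mpr ha'.1) (Finset.mem_coe.mpr hb'.1) hne
  have h2 : Hᶜ.Adj a b := hS (Finset.mem_coe.mpr ha'.2) (Finset.mem_coe.mpr hb'.2) hne
  rw [SimpleGraph.compl_adj] at h2
  exact h2.2 h1

lemma central (H : SimpleGraph (ZMod n))
    (hinv : ∀ a b t : ZMod n, H.Adj (a + t) (b + t) ↔ H.Adj a b)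
    {C S : Set (ZMod n)} (hC : H.IsClique C) (hS : Hᶜ.IsClique S) :
    (∀ t : ZMod n, (((· + t) '' C) ∩ S).Nonempty) ↔ C.ncard * S.ncard = n := by
  classical
  set C' := C.toFinset with hC'
  set S' := S.toFinset with hS'
  have hCset : (C' : Set (ZMod n)) = C := Set.coe_toFinset C
  have hSset : (S' : Set (ZMod n)) = S := Set.coe_toFinset S
  have hinter : ∀ t : ZMod n,
      (((· + t) '' C) ∩ S) = ((C'.image (· + t)) ∩ S' : Finset (ZMod n)) := by
    intro t
    rw [Finset.coe_inter, Finset.coe_image, hCset, hSset]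
  have hle : ∀ t : ZMod n, ((C'.image (· + t)) ∩ S').card ≤ 1 := by
    intro t
    refine cliqueStable_card_le_one H ?_ (hSset ▸ hS)
    rw [Finset.coe_image, hCset]
    exact translate_isClique H hinv hC t
  have hsum := count_sum C' S'
  have hCn : C.ncard = C'.card := Set.ncard_eq_toFinset_card' C
  have hSn : S.ncard = S'.card := Set.ncard_eq_toFinset_card' S
  have hone : ∑ _u : ZMod n, (1 : ℕ) = n := by
    simp [Finset.card_univ, ZMod.card]
  constructor
  · intro hne
    have heq : ∀ t : ZMod n, ((C'.image (· + t)) ∩ S').card = 1 := by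
      intro t
      refine le_antisymm (hle t) (Finset.card_pos.mpr ?_)
      have h := hne t
      rw [hinter t] at h
      exact Finset.coe_nonempty.mp h
    rw [hCn, hSn, ← hsum]
    calc ∑ t : ZMod n, ((C'.image (· + t)) ∩ S').card
        = ∑ _t : ZMod n, 1 := Finset.sum_congr rfl fun t _ => heq t
      _ = n := hone
  · intro hprod t
    rw [hinter t]
    rw [Finset.coe_nonempty, ← Finset.card_pos]
    by_contra h
    have h0 : ((C'.image (· + t)) ∩ S').card = 0 := by omega
    have hlt : ∑ u : ZMod n, ((C'.image (· + u)) ∩ S').card < ∑ _u : ZMod n, (1 : ℕ) :=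
      Finset.sum_lt_sum (fun i _ => hle i) ⟨t, Finset.mem_univ t, by omega⟩
    rw [hsum, hone] at hlt
    rw [hCn, hSn] at hprod
    omega

end Aux

/-- A circulant `C_n(D)` is CIS iff every maximal stable set has size `α(G)`,
every maximal clique has size `ω(G)`, and `α(G) * ω(G) = n`. -/
theorem stmt_0 (n : ℕ) (hn : 0 < n) (D : Finset ℕ) (hD : D ⊆ Finset.Icc 1 (n - 1))
    (hsym : ∀ d ∈ D, n - d ∈ D) :
    (circulant n D).IsCIS ↔
      ((∀ S : Set (ZMod n), Maximal (circulant n D)ᶜ.IsClique S →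
          S.ncard = (circulant n D)ᶜ.cliqueNum) ∧
       (∀ C : Set (ZMod n), Maximal (circulant n D).IsClique C →
          C.ncard = (circulant n D).cliqueNum) ∧
       (circulant n D)ᶜ.cliqueNum * (circulant n D).cliqueNum = n) := by
  classical
  haveI : NeZero n := ⟨hn.ne'⟩
  set G := circulant n D with hG
  have hinv : ∀ a b t : ZMod n, G.Adj (a + t) (b + t) ↔ G.Adj a b := by
    intro a b t
    simp only [hG, circulant, SimpleGraph.fromRel_adj, add_sub_add_right_eq_sub, ne_eq,
      add_left_inj]
  have hmaxclique : ∀ H : SimpleGraph (ZMod n),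
      ∃ C : Set (ZMod n), Maximal H.IsClique C ∧ C.ncard = H.cliqueNum := by
    intro H
    obtain ⟨s, hs⟩ := H.exists_isNClique_cliqueNum
    obtain ⟨M, hle, hmax⟩ := Finite.exists_le_maximal (p := H.IsClique) hs.isClique
    refine ⟨M, hmax, le_antisymm ?_ ?_⟩
    · have h1 : H.IsClique (M.toFinset : Set (ZMod n)) := by
        rw [Set.coe_toFinset]; exact hmax.1
      have := h1.card_le_cliqueNum
      rwa [Set.ncard_eq_toFinset_card']
    · have h2 := Set.ncard_le_ncard hle (Set.toFinite M)
      rwa [Set.ncard_coe_finset, hs.card_eq] at h2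
  have hpos : ∀ H : SimpleGraph (ZMod n), 1 ≤ H.cliqueNum := by
    intro H
    have h1 : H.IsClique (({0} : Finset (ZMod n)) : Set (ZMod n)) := by simp
    have := h1.card_le_cliqueNum
    simpa using this
  obtain ⟨Cw, hCw, hCwcard⟩ := hmaxclique G
  obtain ⟨Sa, hSa, hSacard⟩ := hmaxclique Gᶜ
  constructor
  · intro hcis
    have key : ∀ C S : Set (ZMod n), Maximal G.IsClique C → Maximal Gᶜ.IsClique S →
        C.ncard * S.ncard = n := by
      intro C S hC hS
      exact (central G hinv hC.1 hS.1).mp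
        (fun t => hcis _ S (translate_maximal G hinv hC t) hS)
    have hws := key Cw Sa hCw hSa
    refine ⟨?_, ?_, ?_⟩
    · intro S hS
      have h2 := key Cw S hCw hS
      have hcpos : 0 < Cw.ncard := by rw [hCwcard]; exact hpos G
      rw [← hSacard]
      exact Nat.eq_of_mul_eq_mul_left hcpos (by rw [h2, hws])
    · intro C hC
      have h2 := key C Sa hC hSa
      have hspos : 0 < Sa.ncard := by rw [hSacard]; exact hpos Gᶜ
      rw [← hCwcard]
      exact Nat.eq_of_mul_eq_mul_right hspos (by rw [h2, hws])
    · rw [← hSacard, ← hCwcard, mul_comm]; exact hws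
  · rintro ⟨h1, h2, h3⟩ C S hC hS
    have hprod : C.ncard * S.ncard = n := by
      rw [h2 C hC, h1 S hS, mul_comm]; exact h3
    have := (central G hinv hC.1 hS.1).mpr hprod 0
    simpa using this
end

section
/- For every circulant graph G = C_n(D), the inequality α(G)·ω(G) ≤ n holds. -/
open SimpleGraph Finset

lemma circulant_adj_iff_of_sub_eq {n : ℕ} {D : Finset ℕ} {i j i' j' : ZMod n}
    (h : i - j = i' - j') : (circulant n D).Adj i j ↔ (circulant n D).Adj i' j' := by
  have hne : i ≠ j ↔ i' ≠ j' := by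
    constructor <;> intro hh heq <;> apply hh <;>
      [subst heq; subst heq] <;> [skip; skip]
    · have : i - j = 0 := by rw [h]; ring
      linear_combination this
    · have : i' - j' = 0 := by rw [← h]; ring
      linear_combination this
  have h2 : j - i = j' - i' := by linear_combination -h
  simp only [circulant, fromRel_adj, h, h2, hne]

/-- For every circulant `C_n(D)`, we have `α(G) * ω(G) ≤ n`. -/
theorem stmt_1 (n : ℕ) (hn : 0 < n) (D : Finset ℕ) (hD : D ⊆ Finset.Icc 1 (n - 1))
    (hsym : ∀ d ∈ D, n - d ∈ D) :
    (circulant n D)ᶜ.cliqueNum * (circulant n D).cliqueNum ≤ n := by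
  haveI : NeZero n := ⟨hn.ne'⟩
  set G := circulant n D
  obtain ⟨s, hs⟩ := Gᶜ.exists_isNClique_cliqueNum
  obtain ⟨t, ht⟩ := G.exists_isNClique_cliqueNum
  rw [← hs.card_eq, ← ht.card_eq]
  have key : ∀ p ∈ s ×ˢ t, ∀ q ∈ s ×ˢ t,
      p.2 - p.1 = q.2 - q.1 → p = q := by
    rintro ⟨a, c⟩ hp ⟨a', c'⟩ hq h
    simp only [Finset.mem_product] at hp hq
    by_cases hcc : c = c'
    · subst hcc
      have : a = a' := by linear_combination -h
      simp [this]
    · exfalso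
      have hadj : G.Adj c c' := ht.isClique hp.2 hq.2 hcc
      have haa : a ≠ a' := fun he => hcc (by subst he; linear_combination h)
      have hadj' : Gᶜ.Adj a a' := hs.isClique hp.1 hq.1 haa
      have : G.Adj a a' := (circulant_adj_iff_of_sub_eq
        (by linear_combination h : c - c' = a - a')).mp hadj
      exact hadj'.2 this
  calc s.card * t.card = (s ×ˢ t).card := (Finset.card_product s t).symm
    _ ≤ (Finset.univ : Finset (ZMod n)).card := by
        apply Finset.card_le_card_of_injOn (fun p => p.2 - p.1) (fun _ _ => Finset.mem_univ _)
        intro p hp q hq h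
        exact key p hp q hq h
    _ = n := by simp [ZMod.card]
end

section
/- Let G = C(n; a_1,b_1; …; a_k,b_k) be a k-paired circulant with k ≥ 1, and let d = lcm(a_1·b_1, …, a_k·b_k). Then G is isomorphic to the lexicographic product of the k-paired circulant C(d; a_1,b_1; …; a_k,b_k) and the edgeless graph S_{n/d} on n/d vertices. -/
open SimpleGraph Finset

/-- A `k`-paired circulant `C(n; a₁,b₁; …; a_k,b_k)` with `k ≥ 1` is isomorphic
to the lexicographic product of `C(d; a₁,b₁; …; a_k,b_k)` and the edgeless graph on `n/d`
vertices, where `d = lcm(a₁b₁, …, a_k b_k)`. -/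
theorem stmt_7 (n k : ℕ) (hn : 0 < n) (hk : 1 ≤ k) (a b : Fin k → ℕ)
    (ha : ∀ i, 0 < a i) (hb : ∀ i, 0 < b i) (hab : ∀ i, a i * b i ∣ n) :
    Nonempty (pairedCirculant n a b ≃g
      lexProd (pairedCirculant (Finset.univ.lcm (fun i => a i * b i)) a b)
        (⊥ : SimpleGraph (ZMod (n / Finset.univ.lcm (fun i => a i * b i))))) := by

  classical
  set d := Finset.univ.lcm (fun i : Fin k => a i * b i) with hd
  have hdn : d ∣ n := Finset.lcm_dvd fun i _ => hab i
  have hn0 : n ≠ 0 := hn.ne'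
  haveI : NeZero n := ⟨hn0⟩
  have hd0 : d ≠ 0 := fun h => hn0 (by simpa [h] using hdn)
  haveI : NeZero d := ⟨hd0⟩
  have hdpos : 0 < d := Nat.pos_of_ne_zero hd0
  have hq : d * (n / d) = n := Nat.mul_div_cancel' hdn
  have hq0 : n / d ≠ 0 := by
    intro h; rw [h, Nat.mul_zero] at hq; exact hn0 hq.symm
  haveI : NeZero (n / d) := ⟨hq0⟩
  have habd : ∀ i, a i * b i ∣ d := fun i => Finset.dvd_lcm (Finset.mem_univ i)
  have hald : ∀ i, a i ∣ d := fun i => dvd_trans (dvd_mul_right (a i) (b i)) (habd i)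
  have memD : ∀ (m : ℕ) (v : ℕ),
      (v ∈ Finset.univ.biUnion (fun i : Fin k => pairedD m (a i) (b i))) ↔
        (1 ≤ v ∧ v ≤ m - 1 ∧ ∃ i, a i ∣ v ∧ ¬ a i * b i ∣ v) := by
    intro m v
    simp only [Finset.mem_biUnion, Finset.mem_univ, true_and, pairedD, Finset.mem_filter,
      Finset.mem_Icc]
    constructor
    · rintro ⟨i, ⟨h1, h2⟩, h3, h4⟩; exact ⟨h1, h2, i, h3, h4⟩
    · rintro ⟨h1, h2, i, h3, h4⟩; exact ⟨i, ⟨h1, h2⟩, h3, h4⟩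
  set f : ZMod n → ZMod d := fun x => ((x.val : ℕ) : ZMod d) with hf
  have hfhom : ∀ x, f x = ZMod.castHom hdn (ZMod d) x := by
    intro x
    simp [hf, ZMod.natCast_val, ZMod.castHom_apply]
  have hfsub : ∀ x y : ZMod n, f x - f y = f (x - y) := by
    intro x y; simp only [hfhom]; rw [map_sub]
  have hfval : ∀ c : ZMod n, (f c).val = c.val % d := by
    intro c
    show ((c.val : ℕ) : ZMod d).val = c.val % d
    exact ZMod.val_natCast d _
  have key : ∀ c : ZMod n,
      (c.val ∈ Finset.univ.biUnion (fun i : Fin k => pairedD n (a i) (b i))) ↔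
      ((f c).val ∈ Finset.univ.biUnion (fun i : Fin k => pairedD d (a i) (b i))) := by
    intro c
    rw [memD, memD, hfval]
    constructor
    · rintro ⟨h1, h2, i, hi1, hi2⟩
      have hu0 : c.val % d ≠ 0 := by
        intro h
        exact hi2 ((Nat.dvd_mod_iff (habd i)).mp (h ▸ dvd_zero _))
      have hult : c.val % d < d := Nat.mod_lt _ hdpos
      exact ⟨Nat.one_le_iff_ne_zero.mpr hu0, by omega,
        i, (Nat.dvd_mod_iff (hald i)).mpr hi1,
        fun h => hi2 ((Nat.dvd_mod_iff (habd i)).mp h)⟩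
    · rintro ⟨h1, h2, i, hi1, hi2⟩
      have hle : c.val % d ≤ c.val := Nat.mod_le _ _
      have hvlt : c.val < n := ZMod.val_lt c
      exact ⟨by omega, by omega,
        i, (Nat.dvd_mod_iff (hald i)).mp hi1,
        fun h => hi2 ((Nat.dvd_mod_iff (habd i)).mpr h)⟩
  have hnz : ∀ c : ZMod n,
      ((f c).val ∈ Finset.univ.biUnion (fun i : Fin k => pairedD d (a i) (b i))) →
      f c ≠ 0 := by
    intro c hc h0
    rw [memD] at hc
    rw [h0, ZMod.val_zero] at hc
    omega
  have adj_iff : ∀ x y : ZMod n,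
      (pairedCirculant d a b).Adj (f x) (f y) ↔ (pairedCirculant n a b).Adj x y := by
    intro x y
    simp only [pairedCirculant, circulant, SimpleGraph.fromRel_adj]
    rw [hfsub x y, hfsub y x, ← key (x - y), ← key (y - x)]
    constructor
    · rintro ⟨h1, h2⟩
      exact ⟨fun he => h1 (by rw [he]), h2⟩
    · rintro ⟨h1, h2⟩
      refine ⟨?_, h2⟩
      rcases h2 with hP | hQ
      · have := hnz _ ((key (x - y)).mp hP)
        rw [← hfsub x y] at this
        exact sub_ne_zero.mp this
      · have := hnz _ ((key (y - x)).mp hQ)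
        rw [← hfsub y x] at this
        exact (sub_ne_zero.mp this).symm
  let e : ZMod n ≃ ZMod d × ZMod (n / d) :=
  { toFun := fun x => (f x, ((x.val / d : ℕ) : ZMod (n / d)))
    invFun := fun p => ((p.1.val + d * p.2.val : ℕ) : ZMod n)
    left_inv := by
      intro x
      have h2 : ((x.val / d : ℕ) : ZMod (n / d)).val = x.val / d :=
        ZMod.val_cast_of_lt (Nat.div_lt_div_of_lt_of_dvd hdn (ZMod.val_lt x))
      simp only [hfval, h2, Nat.mod_add_div]
      rw [ZMod.natCast_val, ZMod.cast_id]
    right_inv := by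
      rintro ⟨u, w⟩
      have h1 : u.val < d := ZMod.val_lt u
      have h2 : w.val < n / d := ZMod.val_lt w
      have hs : u.val + d * w.val < n := by
        calc u.val + d * w.val < d + d * w.val := by omega
          _ = d * (w.val + 1) := by ring
          _ ≤ d * (n / d) := Nat.mul_le_mul_left _ h2
          _ = n := hq
      have hv : ((u.val + d * w.val : ℕ) : ZMod n).val = u.val + d * w.val :=
        ZMod.val_cast_of_lt hs
      have hdiv : (u.val + d * w.val) / d = w.val := by
        rw [Nat.add_mul_div_left _ _ hdpos, Nat.div_eq_of_lt h1, Nat.zero_add]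
      refine Prod.ext ?_ ?_
      · show ((((u.val + d * w.val : ℕ) : ZMod n)).val : ZMod d) = u
        rw [hv, Nat.cast_add, Nat.cast_mul, ZMod.natCast_self, zero_mul, add_zero,
          ZMod.natCast_val, ZMod.cast_id]
      · show ((_ / d : ℕ) : ZMod (n / d)) = w
        rw [hv, hdiv, ZMod.natCast_val, ZMod.cast_id] }
  refine ⟨{ toEquiv := e, map_rel_iff' := ?_ }⟩
  intro x y
  show ((pairedCirculant d a b).Adj (f x) (f y) ∨
      (f x = f y ∧ (⊥ : SimpleGraph (ZMod (n / d))).Adj _ _)) ↔ _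
  simp only [SimpleGraph.bot_adj, and_false, or_false]
  exact adj_iff x y
end

section
/- Let G = C(n; a_1,b_1; …; a_k,b_k) be a k-paired circulant with k ≥ 1, and suppose a_ℓ = 1 for some ℓ ∈ [k]. Then G is isomorphic to the lexicographic product of the complete graph K_{b_ℓ} and the (k−1)-paired circulant of order n/b_ℓ generated by the pairs (A_i, B_i) for i ∈ [k] \ {ℓ}, where A_i = a_i / gcd(a_i, b_ℓ) and B_i = b_i · gcd(a_i, b_ℓ)/gcd(a_i·b_i, b_ℓ). -/
open SimpleGraph Finset

lemma aux_dvd_iff (a c t : ℕ) (hc : 0 < c) : a ∣ c * t ↔ a / Nat.gcd a c ∣ t := by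
  have hgpos : 0 < Nat.gcd a c := Nat.gcd_pos_of_pos_right a hc
  have h1 : Nat.gcd a c ∣ a := Nat.gcd_dvd_left a c
  have h2 : Nat.gcd a c ∣ c := Nat.gcd_dvd_right a c
  have hco := Nat.coprime_div_gcd_div_gcd hgpos
  have e1 : c * t = Nat.gcd a c * (c / Nat.gcd a c * t) := by
    rw [← Nat.mul_assoc, Nat.mul_div_cancel' h2]
  rw [e1]
  constructor
  · intro h
    have h' : a / Nat.gcd a c ∣ (c / Nat.gcd a c) * t := by
      exact (Nat.mul_dvd_mul_iff_left hgpos).mp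
        (show Nat.gcd a c * (a / Nat.gcd a c) ∣ _ by rw [Nat.mul_div_cancel' h1]; exact h)
    exact hco.dvd_of_dvd_mul_left h'
  · intro h
    calc a ∣ a * (c / Nat.gcd a c) := Dvd.intro _ rfl
    _ = Nat.gcd a c * (a / Nat.gcd a c) * (c / Nat.gcd a c) := by rw [Nat.mul_div_cancel' h1]
    _ ∣ Nat.gcd a c * (c / Nat.gcd a c * t) := by
        rw [Nat.mul_assoc]
        exact Nat.mul_dvd_mul_left _ (by rw [Nat.mul_comm]; exact Nat.mul_dvd_mul_left _ h)

/-- If `a_ℓ = 1` for some `ℓ`, then the `k`-paired circulant is isomorphic to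
the lexicographic product of `K_{b_ℓ}` and the `(k-1)`-paired circulant of order `n / b_ℓ`
generated by the pairs `(A_i, B_i)`, `i ≠ ℓ`, where `A_i = a_i / gcd(a_i, b_ℓ)` and
`B_i = b_i · gcd(a_i, b_ℓ) / gcd(a_i b_i, b_ℓ)`. -/
theorem stmt_10 (n k : ℕ) (hn : 0 < n) (a b : Fin k → ℕ)
    (ha : ∀ i, 0 < a i) (hb : ∀ i, 0 < b i) (hab : ∀ i, a i * b i ∣ n)
    (ℓ : Fin k) (hℓ : a ℓ = 1) :
    Nonempty (pairedCirculant n a b ≃g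
      lexProd (⊤ : SimpleGraph (Fin (b ℓ)))
        (pairedCirculant (n / b ℓ)
          (fun i : {i : Fin k // i ≠ ℓ} => a i.1 / Nat.gcd (a i.1) (b ℓ))
          (fun i : {i : Fin k // i ≠ ℓ} =>
            b i.1 * Nat.gcd (a i.1) (b ℓ) / Nat.gcd (a i.1 * b i.1) (b ℓ)))) := by
  classical
  haveI : NeZero n := ⟨hn.ne'⟩
  set b0 := b ℓ with hb0def
  have hb0 : 0 < b0 := hb ℓ
  have hbdvd : b0 ∣ n := by have h := hab ℓ; rwa [hℓ, one_mul] at h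
  set m := n / b0 with hmdef
  have hnm : n = b0 * m := (Nat.mul_div_cancel' hbdvd).symm
  have hm : 0 < m := Nat.div_pos (Nat.le_of_dvd hn hbdvd) hb0
  haveI : NeZero m := ⟨hm.ne'⟩
  -- the big distance sets
  set D : Finset ℕ := Finset.univ.biUnion (fun i => pairedD n (a i) (b i)) with hD
  set A : {i : Fin k // i ≠ ℓ} → ℕ := fun i => a i.1 / Nat.gcd (a i.1) b0 with hA
  set B : {i : Fin k // i ≠ ℓ} → ℕ :=
    fun i => b i.1 * Nat.gcd (a i.1) b0 / Nat.gcd (a i.1 * b i.1) b0 with hB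
  set D' : Finset ℕ := Finset.univ.biUnion (fun i => pairedD m (A i) (B i)) with hD'
  have hlt : ∀ (r : Fin b0) (s : ZMod m), b0 * s.val + (r : ℕ) < n := by
    intro r s
    have h1 : s.val < m := ZMod.val_lt s
    have h2 : (r : ℕ) < b0 := r.isLt
    calc b0 * s.val + (r : ℕ) < b0 * s.val + b0 := by omega
    _ = b0 * (s.val + 1) := by ring
    _ ≤ b0 * m := Nat.mul_le_mul_left _ h1
    _ = n := hnm.symm
  let e : Fin b0 × ZMod m ≃ ZMod n :=
  { toFun := fun p => ((b0 * p.2.val + (p.1 : ℕ) : ℕ) : ZMod n)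
    invFun := fun x => (⟨x.val % b0, Nat.mod_lt _ hb0⟩, ((x.val / b0 : ℕ) : ZMod m))
    left_inv := by
      rintro ⟨r, s⟩
      have hv : ((b0 * s.val + (r : ℕ) : ℕ) : ZMod n).val = b0 * s.val + (r : ℕ) := by
        rw [ZMod.val_natCast, Nat.mod_eq_of_lt (hlt r s)]
      ext
      · simp only [hv]
        have : (b0 * s.val + (r : ℕ)) % b0 = (r : ℕ) := by
          rw [Nat.mul_add_mod]
          exact Nat.mod_eq_of_lt r.isLt
        simp [this]
      · simp only [hv]
        have : (b0 * s.val + (r : ℕ)) / b0 = s.val := by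
          rw [Nat.mul_add_div hb0, Nat.div_eq_of_lt r.isLt, Nat.add_zero]
        rw [this]
        exact ZMod.natCast_rightInverse s
    right_inv := by
      intro x
      have hx : x.val < n := ZMod.val_lt x
      have hq : x.val / b0 < m := by
        rw [Nat.div_lt_iff_lt_mul hb0]
        exact lt_of_lt_of_le hx (le_of_eq (by rw [hnm, Nat.mul_comm]))
      have hv : ((x.val / b0 : ℕ) : ZMod m).val = x.val / b0 := ZMod.val_cast_of_lt hq
      show (((b0 * _ + _ : ℕ)) : ZMod n) = x
      rw [hv]
      have : b0 * (x.val / b0) + x.val % b0 = x.val := Nat.div_add_mod x.val b0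
      rw [this]
      exact ZMod.natCast_rightInverse x }
  have heval : ∀ p : Fin b0 × ZMod m, (e p).val = b0 * p.2.val + (p.1 : ℕ) := by
    intro p
    show ((b0 * p.2.val + (p.1 : ℕ) : ℕ) : ZMod n).val = _
    rw [ZMod.val_natCast, Nat.mod_eq_of_lt (hlt p.1 p.2)]
  -- cross-coset: b0 does not divide the difference
  have hC1 : ∀ p q : Fin b0 × ZMod m, p.1 ≠ q.1 → ¬ (b0 ∣ (e p - e q).val) := by
    intro p q hne hdvd
    haveI : NeZero b0 := ⟨hb0.ne'⟩
    have h1 : (((e p - e q).val : ℕ) : ZMod n) = ((e p).val : ZMod n) - ((e q).val : ZMod n) := by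
      rw [ZMod.natCast_rightInverse, ZMod.natCast_rightInverse, ZMod.natCast_rightInverse]
    have h2 := congrArg (ZMod.castHom hbdvd (ZMod b0)) h1
    rw [map_sub, map_natCast, map_natCast, map_natCast] at h2
    rw [heval p, heval q] at h2
    push_cast at h2
    rw [ZMod.natCast_self] at h2
    simp only [zero_mul, zero_add] at h2
    have h3 : (((e p - e q).val : ℕ) : ZMod b0) = 0 :=
      (ZMod.natCast_eq_zero_iff _ _).mpr hdvd
    rw [h3] at h2
    have h4 : (((p.1 : ℕ) : ZMod b0)) = ((q.1 : ℕ) : ZMod b0) := by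
      have := h2.symm
      linear_combination (this) + ((q.1 : ℕ) : ZMod b0) - ((q.1 : ℕ) : ZMod b0)
    have h5 : (p.1 : ℕ) = (q.1 : ℕ) := by
      have := congrArg ZMod.val h4
      rwa [ZMod.val_cast_of_lt p.1.isLt, ZMod.val_cast_of_lt q.1.isLt] at this
    exact hne (Fin.ext h5)
  -- same-coset: difference is b0 * (s1 - s2).val
  have hC2 : ∀ p q : Fin b0 × ZMod m, p.1 = q.1 →
      (e p - e q : ZMod n) = ((b0 * (p.2 - q.2).val : ℕ) : ZMod n) := by
    rintro ⟨r1, s1⟩ ⟨r2, s2⟩ h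
    simp only at h
    subst h
    have h1 : (e (r1, s1) : ZMod n) - e (r1, s2)
        = ((b0 * s1.val : ℕ) : ZMod n) - ((b0 * s2.val : ℕ) : ZMod n) := by
      show ((b0 * s1.val + (r1 : ℕ) : ℕ) : ZMod n) - ((b0 * s2.val + (r1 : ℕ) : ℕ) : ZMod n) = _
      push_cast
      ring
    rw [h1]
    have ht : ((s1 - s2).val + s2.val) ≡ s1.val [MOD m] := by
      rw [← ZMod.natCast_eq_natCast_iff]
      push_cast
      rw [ZMod.natCast_rightInverse, ZMod.natCast_rightInverse, ZMod.natCast_rightInverse]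
      ring
    have hmod : b0 * ((s1 - s2).val + s2.val) ≡ b0 * s1.val [MOD n] := by
      rw [hnm]; exact Nat.ModEq.mul_left' b0 ht
    have hcast : ((b0 * ((s1 - s2).val + s2.val) : ℕ) : ZMod n) = ((b0 * s1.val : ℕ) : ZMod n) :=
      (ZMod.natCast_eq_natCast_iff _ _ _).mpr hmod
    rw [sub_eq_iff_eq_add, ← Nat.cast_add, ← Nat.mul_add]
    exact hcast.symm
  have hprod : ∀ i : {i : Fin k // i ≠ ℓ},
      A i * B i = (a i.1 * b i.1) / Nat.gcd (a i.1 * b i.1) b0 := by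
    intro i
    have hga : Nat.gcd (a i.1) b0 ∣ a i.1 := Nat.gcd_dvd_left _ _
    have hgpos : 0 < Nat.gcd (a i.1) b0 := Nat.gcd_pos_of_pos_right _ hb0
    have hgG : Nat.gcd (a i.1 * b i.1) b0 ∣ b i.1 * Nat.gcd (a i.1) b0 := by
      have h := Nat.dvd_gcd
        (show Nat.gcd (a i.1 * b i.1) b0 ∣ b i.1 * a i.1 by
          rw [Nat.mul_comm]; exact Nat.gcd_dvd_left _ _)
        ((Nat.gcd_dvd_right (a i.1 * b i.1) b0).mul_left (b i.1))
      rwa [Nat.gcd_mul_left] at h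
    show a i.1 / Nat.gcd (a i.1) b0 * (b i.1 * Nat.gcd (a i.1) b0 / Nat.gcd (a i.1 * b i.1) b0) = _
    rw [Nat.div_mul_div_comm hga hgG]
    have h1 : a i.1 * (b i.1 * Nat.gcd (a i.1) b0) = a i.1 * b i.1 * Nat.gcd (a i.1) b0 := by ring
    have h2 : Nat.gcd (a i.1) b0 * Nat.gcd (a i.1 * b i.1) b0
        = Nat.gcd (a i.1 * b i.1) b0 * Nat.gcd (a i.1) b0 := by ring
    rw [h1, h2, Nat.mul_div_mul_right _ _ hgpos]
  -- the number-theoretic core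
  have hC3 : ∀ t : ℕ, 1 ≤ t → t ≤ m - 1 → (b0 * t ∈ D ↔ t ∈ D') := by
    intro t ht1 ht2
    have hbt1 : 1 ≤ b0 * t := Nat.one_le_iff_ne_zero.mpr (Nat.mul_ne_zero hb0.ne' (by omega))
    have hbt2 : b0 * t ≤ n - 1 := by
      have h1 : b0 * t ≤ b0 * (m - 1) := Nat.mul_le_mul_left _ ht2
      have h2 : b0 * (m - 1) = b0 * m - b0 := by rw [Nat.mul_sub]; simp
      omega
    simp only [hD, hD', Finset.mem_biUnion, Finset.mem_univ, true_and, pairedD,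
      Finset.mem_filter, Finset.mem_Icc]
    constructor
    · rintro ⟨i, _, h1, h2⟩
      by_cases hi : i = ℓ
      · subst hi
        exact absurd (show a i * b0 ∣ b0 * t by rw [hℓ, one_mul]; exact dvd_mul_right b0 t) h2
      · refine ⟨⟨i, hi⟩, ⟨ht1, ht2⟩, ?_, ?_⟩
        · exact (aux_dvd_iff (a i) b0 t hb0).mp h1
        · intro hc
          apply h2
          rw [aux_dvd_iff (a i * b i) b0 t hb0]
          rwa [← hprod ⟨i, hi⟩]
    · rintro ⟨i, _, h1, h2⟩
      refine ⟨i.1, ⟨hbt1, hbt2⟩, ?_, ?_⟩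
      · exact (aux_dvd_iff (a i.1) b0 t hb0).mpr h1
      · intro hc
        apply h2
        rw [hprod i]
        exact (aux_dvd_iff (a i.1 * b i.1) b0 t hb0).mp hc
  -- adjacency characterizations
  have hG : ∀ x y : ZMod n, (pairedCirculant n a b).Adj x y ↔
      x ≠ y ∧ ((x - y).val ∈ D ∨ (y - x).val ∈ D) := by
    intro x y
    simp only [pairedCirculant, circulant, fromRel_adj, ← hD]
  have hH : ∀ x y : ZMod m, (pairedCirculant m A B).Adj x y ↔
      x ≠ y ∧ ((x - y).val ∈ D' ∨ (y - x).val ∈ D') := by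
    intro x y
    simp only [pairedCirculant, circulant, fromRel_adj, ← hD']
  have hL : ∀ p q : Fin b0 × ZMod m,
      (lexProd (⊤ : SimpleGraph (Fin b0)) (pairedCirculant m A B)).Adj p q ↔
      (p.1 ≠ q.1 ∨ (p.1 = q.1 ∧ (pairedCirculant m A B).Adj p.2 q.2)) := by
    intro p q
    show ((⊤ : SimpleGraph (Fin b0)).Adj p.1 q.1 ∨ _) ↔ _
    rw [top_adj]
  have hvlt : ∀ s : ZMod m, b0 * s.val < n := by
    intro s
    rw [hnm]
    exact mul_lt_mul_of_pos_left (ZMod.val_lt s) hb0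
  have hvd : ∀ s1 s2 : ZMod m, ∀ r : Fin b0,
      (e (r, s1) - e (r, s2)).val = b0 * (s1 - s2).val := by
    intro s1 s2 r
    rw [hC2 (r, s1) (r, s2) rfl, ZMod.val_natCast, Nat.mod_eq_of_lt (hvlt _)]
  have hadj : ∀ p q : Fin b0 × ZMod m,
      (pairedCirculant n a b).Adj (e p) (e q) ↔
      (lexProd (⊤ : SimpleGraph (Fin b0)) (pairedCirculant m A B)).Adj p q := by
    rintro ⟨r1, s1⟩ ⟨r2, s2⟩
    rw [hG, hL]
    by_cases hr : r1 = r2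
    · subst hr
      by_cases hs : s1 = s2
      · subst hs
        simp
      · have hpq : (⟨r1, s1⟩ : Fin b0 × ZMod m) ≠ ⟨r1, s2⟩ := by
          intro h
          exact hs (congrArg Prod.snd h)
        have hne : e (r1, s1) ≠ e (r1, s2) := fun h => hpq (e.injective h)
        have hval1 : ∀ s s' : ZMod m, s ≠ s' → 1 ≤ (s - s').val ∧ (s - s').val ≤ m - 1 := by
          intro s s' hss
          have h0 : (s - s') ≠ 0 := sub_ne_zero.mpr hss
          have h1 : (s - s').val ≠ 0 := fun h => h0 ((ZMod.val_eq_zero _).mp h)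
          have h2 : (s - s').val < m := ZMod.val_lt _
          omega
        obtain ⟨ha1, ha2⟩ := hval1 s1 s2 hs
        obtain ⟨hb1, hb2⟩ := hval1 s2 s1 (Ne.symm hs)
        rw [hvd s1 s2 r1, hvd s2 s1 r1, hC3 _ ha1 ha2, hC3 _ hb1 hb2, hH]
        simp [hne, hs]
    · have hpq : (⟨r1, s1⟩ : Fin b0 × ZMod m) ≠ ⟨r2, s2⟩ := by
        intro h
        exact hr (congrArg Prod.fst h)
      have hne : e (r1, s1) ≠ e (r2, s2) := fun h => hpq (e.injective h)
      have hmem : (e (r1, s1) - e (r2, s2)).val ∈ D := by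
        have hndvd := hC1 (r1, s1) (r2, s2) hr
        have hw0 : (e (r1, s1) - e (r2, s2)).val ≠ 0 := by
          intro h
          exact hne (sub_eq_zero.mp ((ZMod.val_eq_zero _).mp h))
        have hwlt : (e (r1, s1) - e (r2, s2)).val < n := ZMod.val_lt _
        rw [hD]
        apply Finset.mem_biUnion.mpr
        refine ⟨ℓ, Finset.mem_univ _, ?_⟩
        simp only [pairedD, Finset.mem_filter, Finset.mem_Icc]
        refine ⟨⟨by omega, by omega⟩, ?_, ?_⟩
        · rw [hℓ]; exact one_dvd _
        · rw [hℓ, one_mul]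
          exact hndvd
      simp [hr, hne, hmem]
  exact ⟨(SimpleGraph.Iso.symm
    { toEquiv := e, map_rel_iff' := fun {p q} => hadj p q })⟩
end

section
/- Every P_4-free circulant is paired: if G = C_n(D) is a circulant graph that contains no induced subgraph isomorphic to the path on four vertices, then there exist a nonnegative integer k and positive integers a_1,b_1,…,a_k,b_k with a_i·b_i ∣ n for all i ∈ [k] such that G is isomorphic to the k-paired circulant C(n; a_1,b_1; …; a_k,b_k). -/
open SimpleGraph Finset

open SimpleGraph Finset

section P4

variable {V : Type} {G : SimpleGraph V}

/-- Build a `P₄` embedding from four suitable vertices. -/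
def mkP4 (a b c d : V) (hab : G.Adj a b) (hbc : G.Adj b c) (hcd : G.Adj c d)
    (hac : ¬ G.Adj a c) (had : ¬ G.Adj a d) (hbd : ¬ G.Adj b d) :
    SimpleGraph.pathGraph 4 ↪g G := by
  have hca : ¬ G.Adj c a := fun h => hac h.symm
  have hda : ¬ G.Adj d a := fun h => had h.symm
  have hdb : ¬ G.Adj d b := fun h => hbd h.symm
  have hab' : a ≠ b := hab.ne
  have hbc' : b ≠ c := hbc.ne
  have hcd' : c ≠ d := hcd.ne
  have hac' : a ≠ c := by rintro rfl; exact had hcd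
  have had' : a ≠ d := by rintro rfl; exact hbd hab.symm
  have hbd' : b ≠ d := by rintro rfl; exact had hab
  refine ⟨⟨![a,b,c,d], ?_⟩, ?_⟩
  · intro i j hij
    fin_cases i <;> fin_cases j <;> simp_all <;> rfl
  · intro i j
    show G.Adj (![a,b,c,d] i) (![a,b,c,d] j) ↔ _
    fin_cases i <;> fin_cases j <;>
      simp [pathGraph_adj, hab, hbc, hcd, hab.symm, hbc.symm, hcd.symm, hac, had, hbd,
        hca, hda, hdb, G.irrefl] <;> decide

lemma p4free_compl (h : IsEmpty (SimpleGraph.pathGraph 4 ↪g G)) :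
    IsEmpty (SimpleGraph.pathGraph 4 ↪g Gᶜ) := by
  constructor
  intro f
  have h01 : Gᶜ.Adj (f 0) (f 1) := f.map_rel_iff.mpr (by rw [pathGraph_adj]; decide)
  have h12 : Gᶜ.Adj (f 1) (f 2) := f.map_rel_iff.mpr (by rw [pathGraph_adj]; decide)
  have h23 : Gᶜ.Adj (f 2) (f 3) := f.map_rel_iff.mpr (by rw [pathGraph_adj]; decide)
  have h02 : ¬ Gᶜ.Adj (f 0) (f 2) := fun hh => absurd (f.map_rel_iff.mp hh) (by rw [pathGraph_adj]; decide)
  have h03 : ¬ Gᶜ.Adj (f 0) (f 3) := fun hh => absurd (f.map_rel_iff.mp hh) (by rw [pathGraph_adj]; decide)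
  have h13 : ¬ Gᶜ.Adj (f 1) (f 3) := fun hh => absurd (f.map_rel_iff.mp hh) (by rw [pathGraph_adj]; decide)
  -- distinctness
  have ne02 : f 0 ≠ f 2 := fun e => by simpa using f.injective e
  have ne03 : f 0 ≠ f 3 := fun e => by simpa using f.injective e
  have ne13 : f 1 ≠ f 3 := fun e => by simpa using f.injective e
  -- in G: complement non-adjacency of distinct vertices means adjacency
  have g02 : G.Adj (f 0) (f 2) := by
    by_contra hg; exact h02 ((compl_adj G _ _).mpr ⟨ne02, hg⟩)
  have g03 : G.Adj (f 0) (f 3) := by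
    by_contra hg; exact h03 ((compl_adj G _ _).mpr ⟨ne03, hg⟩)
  have g13 : G.Adj (f 1) (f 3) := by
    by_contra hg; exact h13 ((compl_adj G _ _).mpr ⟨ne13, hg⟩)
  have g01 : ¬ G.Adj (f 0) (f 1) := fun hg => h01.2 hg
  have g12 : ¬ G.Adj (f 1) (f 2) := fun hg => h12.2 hg
  have g23 : ¬ G.Adj (f 2) (f 3) := fun hg => h23.2 hg
  -- induced path  f2 - f0 - f3 - f1  in G
  exact h.false (mkP4 (f 2) (f 0) (f 3) (f 1) g02.symm g03 g13.symm
    g23 (fun hg => g12 hg.symm) g01)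

end P4
section KeyLemma

variable {V : Type} {G : SimpleGraph V}

lemma exists_adj_of_reachable {a b : V} (h : a ≠ b) (hr : G.Reachable a b) :
    ∃ c, G.Adj a c := by
  obtain ⟨w⟩ := hr
  cases w with
  | nil => exact absurd rfl h
  | cons h' _ => exact ⟨_, h'⟩

lemma claim1 (v : V) :
    ∀ {a b : V} (_ : G.Walk a b) (_ : b = v) (ha : a ≠ v),
      ∃ x : ({v}ᶜ : Set V), G.Adj (x : V) v ∧
        (G.induce {v}ᶜ).Reachable ⟨a, ha⟩ x := by
  intro a b w
  induction w with
  | nil => intro hb ha; exact absurd hb ha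
  | @cons a c b h w ih =>
    intro hb ha
    by_cases hc : c = v
    · subst hb; subst hc
      exact ⟨⟨a, ha⟩, h, Reachable.refl _⟩
    · obtain ⟨x, hxv, hr⟩ := ih hb hc
      have hadj : (G.induce ({v}ᶜ : Set V)).Adj ⟨a, ha⟩ ⟨c, hc⟩ := h
      exact ⟨x, hxv, hadj.reachable.trans hr⟩

lemma claim2 (v : V) :
    ∀ {x y : ({v}ᶜ : Set V)} (_ : (G.induce {v}ᶜ).Walk x y),
      G.Adj (x : V) v → ¬ G.Adj (y : V) v →
      ∃ p q : ({v}ᶜ : Set V), (G.induce {v}ᶜ).Adj p q ∧ G.Adj (p : V) v ∧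
        ¬ G.Adj (q : V) v ∧ (G.induce {v}ᶜ).Reachable q y := by
  intro x y w
  induction w with
  | nil => intro hx hy; exact absurd hx hy
  | @cons x c _ h w ih =>
    intro hx hy
    by_cases hc : G.Adj (c : V) v
    · exact ih hc hy
    · exact ⟨x, c, h, hx, hc, ⟨w⟩⟩

lemma aux_disconnected (G : SimpleGraph V) (v : V)
    (hP4 : IsEmpty (SimpleGraph.pathGraph 4 ↪g G))
    (hG : G.Connected) (hGc : Gᶜ.Connected)
    (hnt : ∃ w : V, w ≠ v)
    (hdis : ¬ (G.induce {v}ᶜ).Connected) : False := by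
  obtain ⟨y₀, hy₀v, hy₀⟩ : ∃ y₀, y₀ ≠ v ∧ ¬ G.Adj v y₀ := by
    obtain ⟨w, hw⟩ := hnt
    obtain ⟨c, hc⟩ := exists_adj_of_reachable (Ne.symm hw) (hGc.preconnected v w)
    exact ⟨c, hc.ne', hc.2⟩
  set s : Set V := {v}ᶜ with hs
  set y : ↥s := ⟨y₀, hy₀v⟩ with hy
  haveI : Nonempty ↥s := ⟨y⟩
  have hpre : ¬ (G.induce s).Preconnected := fun hp => hdis ⟨hp⟩
  rw [SimpleGraph.Preconnected] at hpre
  push_neg at hpre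
  obtain ⟨u₁, u₂, hu⟩ := hpre
  obtain ⟨z, hz⟩ : ∃ z : ↥s, ¬ (G.induce s).Reachable z y := by
    by_cases h1 : (G.induce s).Reachable u₁ y
    · exact ⟨u₂, fun h2 => hu (h1.trans h2.symm)⟩
    · exact ⟨u₁, h1⟩
  obtain ⟨w₁⟩ := hG.preconnected y₀ v
  obtain ⟨x₁, hx₁v, hrx₁⟩ := claim1 v w₁ rfl hy₀v
  obtain ⟨w₂⟩ := hG.preconnected (z : V) v
  obtain ⟨x₂, hx₂v, hrx₂⟩ := claim1 v w₂ rfl z.2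
  obtain ⟨wxy⟩ := hrx₁.symm
  obtain ⟨p, q, hpq, hpv, hqv, hqy⟩ := claim2 v wxy hx₁v (fun h => hy₀ h.symm)
  have hx2y : ¬ (G.induce s).Reachable x₂ y := fun h =>
    hz ((hrx₂.trans h))
  have hqx : ¬ G.Adj (q : V) (x₂ : V) := by
    intro h
    have h' : (G.induce s).Adj q x₂ := h
    exact hx2y (h'.symm.reachable.trans hqy)
  have hpx : ¬ G.Adj (p : V) (x₂ : V) := by
    intro h
    have h' : (G.induce s).Adj p x₂ := h
    exact hx2y (h'.symm.reachable.trans (hpq.reachable.trans hqy))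
  have hqp : G.Adj (q : V) (p : V) := hpq.symm
  exact hP4.false (mkP4 (q : V) (p : V) v (x₂ : V) hqp hpv hx₂v.symm hqv hqx hpx)

lemma compl_induce (G : SimpleGraph V) (s : Set V) :
    (G.induce s)ᶜ = Gᶜ.induce s := by
  ext a b
  simp only [SimpleGraph.compl_adj, SimpleGraph.comap_adj, Function.Embedding.coe_subtype]
  constructor
  · rintro ⟨hne, hadj⟩
    exact ⟨Subtype.coe_injective.ne_iff.mpr hne, hadj⟩
  · rintro ⟨hne, hadj⟩
    exact ⟨fun e => hne (congrArg _ e), hadj⟩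

lemma keyLemma : ∀ (N : ℕ) (V : Type) [Fintype V] (G : SimpleGraph V),
    Fintype.card V = N → 2 ≤ Fintype.card V →
    IsEmpty (SimpleGraph.pathGraph 4 ↪g G) → G.Connected → Gᶜ.Connected → False := by
  intro N
  induction N using Nat.strong_induction_on with
  | _ N IH =>
    intro V _ G hcard h2 hP4 hG hGc
    classical
    haveI : Nonempty V := Fintype.card_pos_iff.mp (by omega)
    obtain ⟨v⟩ := ‹Nonempty V›
    have hnt : ∃ w : V, w ≠ v := by
      by_contra hno
      push_neg at hno
      have : Fintype.card V ≤ 1 :=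
        Fintype.card_le_one_iff.mpr (fun a b => (hno a).trans (hno b).symm)
      omega
    rcases Nat.lt_or_ge (Fintype.card V) 3 with h3 | h3
    · -- card V = 2
      obtain ⟨w, hw⟩ := hnt
      have hall : ∀ x : V, x = w ∨ x = v := by
        by_contra hno
        push_neg at hno
        obtain ⟨x, hxw, hxv⟩ := hno
        have hcard3 : ({x, w, v} : Finset V).card = 3 := by
          rw [Finset.card_insert_of_notMem (by simp [hxw, hxv]),
            Finset.card_insert_of_notMem (by simp [hw]), Finset.card_singleton]
        have : 3 ≤ Fintype.card V := by
          calc 3 = ({x, w, v} : Finset V).card := hcard3.symm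
          _ ≤ (Finset.univ : Finset V).card := Finset.card_le_card (Finset.subset_univ _)
          _ = Fintype.card V := Finset.card_univ
        omega
      obtain ⟨c, hc⟩ := exists_adj_of_reachable hw (hG.preconnected w v)
      have hcv : c = v := by
        rcases hall c with h | h
        · rw [h] at hc; exact absurd hc (G.irrefl)
        · exact h
      rw [hcv] at hc
      obtain ⟨c', hc'⟩ := exists_adj_of_reachable hw (hGc.preconnected w v)
      have hcv' : c' = v := by
        rcases hall c' with h | h
        · rw [h] at hc'; exact absurd hc' (Gᶜ.irrefl)
        · exact h
      rw [hcv'] at hc'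
      exact hc'.2 hc
    · -- card V ≥ 3
      set s : Set V := {v}ᶜ with hs
      have hcards : Fintype.card ↥s = Fintype.card V - 1 := by
        have h' : Fintype.card ↥({v}ᶜ : Set V) = Fintype.card V - 1 := by
          rw [Fintype.card_compl_set]; simp
        simpa [hs] using h'
      by_cases hc1 : (G.induce s).Connected
      · by_cases hc2 : (Gᶜ.induce s).Connected
        · refine IH (N - 1) (by omega) ↥s (G.induce s) (by omega) (by omega) ?_ hc1 ?_
          · exact ⟨fun f => hP4.false ((SimpleGraph.Embedding.induce s).comp f)⟩
          · rw [compl_induce]; exact hc2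
        · refine aux_disconnected Gᶜ v (p4free_compl hP4) hGc ?_ hnt ?_
          · rw [compl_compl]; exact hG
          · rw [← hs]; exact hc2
      · exact aux_disconnected G v hP4 hG hGc hnt hc1

end KeyLemma

section CirculantBasics

variable {n : ℕ}

lemma circulant_adj (hn : 0 < n) {D : Finset ℕ} (hsym : ∀ d ∈ D, n - d ∈ D) {i j : ZMod n} :
    (circulant n D).Adj i j ↔ i ≠ j ∧ (i - j).val ∈ D := by
  haveI : NeZero n := ⟨hn.ne'⟩
  rw [circulant, SimpleGraph.fromRel_adj]
  constructor
  · rintro ⟨hne, h | h⟩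
    · exact ⟨hne, h⟩
    · refine ⟨hne, ?_⟩
      have hx : i - j = -(j - i) := by ring
      have h0 : j - i ≠ 0 := sub_ne_zero.mpr (Ne.symm hne)
      rw [hx, ZMod.neg_val, if_neg h0]
      exact hsym _ h
  · rintro ⟨hne, h⟩; exact ⟨hne, Or.inl h⟩

lemma val_sub_mem_Icc (hn : 0 < n) {i j : ZMod n} (hne : i ≠ j) :
    (i - j).val ∈ Finset.Icc 1 (n - 1) := by
  haveI : NeZero n := ⟨hn.ne'⟩
  have h0 : i - j ≠ 0 := sub_ne_zero.mpr hne
  have h1 : (i - j).val ≠ 0 := fun e => h0 ((ZMod.val_eq_zero _).mp e)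
  have h2 : (i - j).val < n := ZMod.val_lt _
  rw [Finset.mem_Icc]
  omega

lemma compl_circulant (hn : 0 < n) {D : Finset ℕ} (hD : D ⊆ Finset.Icc 1 (n - 1))
    (hsym : ∀ d ∈ D, n - d ∈ D) :
    (circulant n D)ᶜ = circulant n ((Finset.Icc 1 (n - 1)) \ D) := by
  have hEsym : ∀ d ∈ (Finset.Icc 1 (n - 1)) \ D, n - d ∈ (Finset.Icc 1 (n - 1)) \ D := by
    intro d hd
    rw [Finset.mem_sdiff, Finset.mem_Icc] at hd ⊢
    obtain ⟨⟨h1, h2⟩, h3⟩ := hd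
    refine ⟨⟨by omega, by omega⟩, fun hmem => ?_⟩
    have := hsym _ hmem
    have he : n - (n - d) = d := by omega
    rw [he] at this
    exact h3 this
  ext i j
  rw [SimpleGraph.compl_adj, circulant_adj hn hsym, circulant_adj hn hEsym]
  constructor
  · rintro ⟨hne, hnadj⟩
    refine ⟨hne, Finset.mem_sdiff.mpr ⟨val_sub_mem_Icc hn hne, fun hmem => hnadj ⟨hne, hmem⟩⟩⟩
  · rintro ⟨hne, hmem⟩
    exact ⟨hne, fun hadj => (Finset.mem_sdiff.mp hmem).2 hadj.2⟩

lemma bezout_mem {S : AddSubgroup (ZMod n)} {a b : ℕ}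
    (ha : ((a : ℕ) : ZMod n) ∈ S) (hb : ((b : ℕ) : ZMod n) ∈ S) :
    ((Nat.gcd a b : ℕ) : ZMod n) ∈ S := by
  have h1 : ((Nat.gcd a b : ℤ) : ZMod n)
      = (((a : ℤ) * Nat.gcdA a b + (b : ℤ) * Nat.gcdB a b : ℤ) : ZMod n) :=
    congrArg _ (Nat.gcd_eq_gcd_ab a b)
  have h2 : ((Nat.gcd a b : ℕ) : ZMod n)
      = Nat.gcdA a b • ((a : ℕ) : ZMod n) + Nat.gcdB a b • ((b : ℕ) : ZMod n) := by
    calc ((Nat.gcd a b : ℕ) : ZMod n) = ((Nat.gcd a b : ℤ) : ZMod n) := by push_cast; ring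
    _ = (((a : ℤ) * Nat.gcdA a b + (b : ℤ) * Nat.gcdB a b : ℤ) : ZMod n) := h1
    _ = Nat.gcdA a b • ((a : ℕ) : ZMod n) + Nat.gcdB a b • ((b : ℕ) : ZMod n) := by
        push_cast [zsmul_eq_mul]; ring
  rw [h2]
  exact S.add_mem (AddSubgroup.zsmul_mem S ha _) (AddSubgroup.zsmul_mem S hb _)

lemma finset_gcd_mem {S : AddSubgroup (ZMod n)} (t : Finset ℕ)
    (h : ∀ d ∈ t, ((d : ℕ) : ZMod n) ∈ S) : ((t.gcd id : ℕ) : ZMod n) ∈ S := by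
  classical
  induction t using Finset.induction_on with
  | empty => simpa using S.zero_mem
  | @insert a t hx ih =>
    rw [Finset.gcd_insert]
    have : (GCDMonoid.gcd (id a) (t.gcd id) : ℕ) = Nat.gcd a (t.gcd id) := rfl
    rw [this]
    exact bezout_mem (h a (Finset.mem_insert_self _ _))
      (ih fun d hd => h d (Finset.mem_insert_of_mem hd))

lemma circ_trans_adj {D : Finset ℕ} (a i j : ZMod n) :
    (circulant n D).Adj (a + i) (a + j) ↔ (circulant n D).Adj i j := by
  rw [circulant, SimpleGraph.fromRel_adj, SimpleGraph.fromRel_adj]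
  have e1 : a + i - (a + j) = i - j := by ring
  have e2 : a + j - (a + i) = j - i := by ring
  rw [e1, e2]
  simp [add_right_inj]

lemma reach_translate {D : Finset ℕ} (a : ZMod n) {x y : ZMod n}
    (h : (circulant n D).Reachable x y) : (circulant n D).Reachable (a + x) (a + y) :=
  h.map (⟨fun z => a + z, fun {u v} h => (circ_trans_adj a u v).mpr h⟩ :
    circulant n D →g circulant n D)

lemma circ_neg_adj {D : Finset ℕ} (i j : ZMod n) :
    (circulant n D).Adj (-i) (-j) ↔ (circulant n D).Adj i j := by
  rw [circulant, SimpleGraph.fromRel_adj, SimpleGraph.fromRel_adj]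
  have e1 : -i - -j = j - i := by ring
  have e2 : -j - -i = i - j := by ring
  rw [e1, e2]
  constructor
  · rintro ⟨h1, h2⟩
    exact ⟨fun e => h1 (congrArg Neg.neg e), h2.symm⟩
  · rintro ⟨h1, h2⟩
    exact ⟨fun e => h1 (by simpa using congrArg Neg.neg e), h2.symm⟩

lemma reach_neg {D : Finset ℕ} {x y : ZMod n}
    (h : (circulant n D).Reachable x y) : (circulant n D).Reachable (-x) (-y) :=
  h.map (⟨fun z => -z, fun {u v} h => (circ_neg_adj u v).mpr h⟩ :
    circulant n D →g circulant n D)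

lemma circulant_connected (hn : 0 < n) {D : Finset ℕ} (hD : D ⊆ Finset.Icc 1 (n - 1))
    (hg : Nat.gcd (D.gcd id) n = 1) : (circulant n D).Connected := by
  haveI : NeZero n := ⟨hn.ne'⟩
  set S : AddSubgroup (ZMod n) :=
    { carrier := {z | (circulant n D).Reachable 0 z}
      zero_mem' := SimpleGraph.Reachable.refl 0
      add_mem' := by
        intro a b ha hb
        have h2 := reach_translate a hb
        rw [add_zero] at h2
        exact SimpleGraph.Reachable.trans ha h2
      neg_mem' := by
        intro a ha
        have h2 := reach_neg ha
        rw [neg_zero] at h2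
        exact h2 } with hS
  have hmemD : ∀ d ∈ D, ((d : ℕ) : ZMod n) ∈ S := by
    intro d hd
    have hIcc := Finset.mem_Icc.mp (hD hd)
    have hval : ((d : ℕ) : ZMod n).val = d := ZMod.val_cast_of_lt (by omega)
    have hne : ((d : ℕ) : ZMod n) ≠ 0 := by
      intro e
      rw [e, ZMod.val_zero] at hval
      omega
    have hadj : (circulant n D).Adj 0 ((d : ℕ) : ZMod n) := by
      rw [circulant, SimpleGraph.fromRel_adj]
      refine ⟨fun e => hne e.symm, Or.inr ?_⟩
      rw [sub_zero, hval]
      exact hd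
    exact hadj.reachable
  have hgcd1 : ((1 : ℕ) : ZMod n) ∈ S := by
    have hn0 : ((n : ℕ) : ZMod n) ∈ S := by
      rw [ZMod.natCast_self]; exact S.zero_mem
    have := bezout_mem (finset_gcd_mem D hmemD) hn0
    rwa [hg] at this
  have hall : ∀ z : ZMod n, (circulant n D).Reachable 0 z := by
    intro z
    have hz : z.val • ((1 : ℕ) : ZMod n) ∈ S := AddSubgroup.nsmul_mem S hgcd1 z.val
    have he : z.val • ((1 : ℕ) : ZMod n) = z := by
      rw [nsmul_eq_mul]
      simp [ZMod.natCast_val, ZMod.cast_id]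
    rwa [he] at hz
  constructor
  intro x y
  have h := reach_translate x (hall (y - x))
  rw [add_zero, add_sub_cancel] at h
  exact h

end CirculantBasics

section Scaling

variable {n : ℕ}

lemma scale_val_sub {m n' : ℕ} (hn' : 0 < n') (hm : 0 < m) (hmn : m * n' = n)
    (x y : ZMod n') :
    ((((m * x.val : ℕ) : ZMod n)) - ((m * y.val : ℕ) : ZMod n)).val
      = m * (x - y).val := by
  haveI : NeZero n' := ⟨hn'.ne'⟩
  haveI : NeZero n := ⟨(hmn ▸ Nat.mul_pos hm hn').ne'⟩
  have h1 : ((x.val : ℤ) - (y.val : ℤ)) ≡ (((x - y).val : ℕ) : ℤ) [ZMOD n'] := by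
    rw [← ZMod.intCast_eq_intCast_iff]
    push_cast
    simp [ZMod.natCast_val, ZMod.cast_id]
  have h2 : (m : ℤ) * ((x.val : ℤ) - (y.val : ℤ))
      ≡ (m : ℤ) * (((x - y).val : ℕ) : ℤ) [ZMOD (m : ℤ) * (n' : ℤ)] := h1.mul_left'
  have h3 : ((m * x.val : ℕ) : ℤ) - ((m * y.val : ℕ) : ℤ)
      ≡ ((m * (x - y).val : ℕ) : ℤ) [ZMOD (n : ℤ)] := by
    have e : ((n : ℕ) : ℤ) = (m : ℤ) * (n' : ℤ) := by push_cast [← hmn]; ring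
    rw [e]
    push_cast
    rw [← mul_sub]
    exact h2
  have h4 : (((m * x.val : ℕ) : ZMod n)) - ((m * y.val : ℕ) : ZMod n)
      = ((m * (x - y).val : ℕ) : ZMod n) := by
    have := (ZMod.intCast_eq_intCast_iff _ _ _).mpr h3
    push_cast at this
    exact_mod_cast this
  rw [h4]
  exact ZMod.val_cast_of_lt (by
    have hlt : (x - y).val < n' := ZMod.val_lt _
    calc m * (x - y).val < m * n' := by exact mul_lt_mul_of_pos_left hlt hm
    _ = n := hmn)

lemma circulant_scale_embedding {m n' : ℕ} (hn' : 0 < n') (hm : 0 < m) (hmn : m * n' = n)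
    (D D' : Finset ℕ) (hcomp : ∀ t, t < n' → (m * t ∈ D ↔ t ∈ D')) :
    Nonempty (circulant n' D' ↪g circulant n D) := by
  haveI : NeZero n' := ⟨hn'.ne'⟩
  haveI : NeZero n := ⟨(hmn ▸ Nat.mul_pos hm hn').ne'⟩
  set φ : ZMod n' → ZMod n := fun x => ((m * x.val : ℕ) : ZMod n) with hφ
  have hinj : Function.Injective φ := by
    intro x y hxy
    have h := scale_val_sub hn' hm hmn x y
    have hxy' : ((m * x.val : ℕ) : ZMod n) = ((m * y.val : ℕ) : ZMod n) := hxy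
    rw [hxy', sub_self, ZMod.val_zero] at h
    have : (x - y).val = 0 := by
      rcases mul_eq_zero.mp h.symm with h' | h'
      · omega
      · exact h'
    have : x - y = 0 := (ZMod.val_eq_zero _).mp this
    exact sub_eq_zero.mp this
  refine ⟨⟨⟨φ, hinj⟩, ?_⟩⟩
  intro x y
  show (circulant n D).Adj (φ x) (φ y) ↔ (circulant n' D').Adj x y
  rw [circulant, circulant, SimpleGraph.fromRel_adj, SimpleGraph.fromRel_adj]
  have k1 : (φ x - φ y).val = m * (x - y).val := scale_val_sub hn' hm hmn x y
  have k2 : (φ y - φ x).val = m * (y - x).val := scale_val_sub hn' hm hmn y x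
  rw [k1, k2]
  constructor
  · rintro ⟨hne, h | h⟩
    · exact ⟨fun e => hne (congrArg φ e),
        Or.inl ((hcomp _ (ZMod.val_lt _)).mp h)⟩
    · exact ⟨fun e => hne (congrArg φ e),
        Or.inr ((hcomp _ (ZMod.val_lt _)).mp h)⟩
  · rintro ⟨hne, h | h⟩
    · exact ⟨fun e => hne (hinj e), Or.inl ((hcomp _ (ZMod.val_lt _)).mpr h)⟩
    · exact ⟨fun e => hne (hinj e), Or.inr ((hcomp _ (ZMod.val_lt _)).mpr h)⟩

lemma pairedD_scale {m n' : ℕ} (hn' : 0 < n') (hm : 0 < m) (hmn : m * n' = n)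
    (a b : ℕ) :
    pairedD n (m * a) b = (pairedD n' a b).image (fun e => m * e) := by
  ext d
  simp only [pairedD, Finset.mem_image, Finset.mem_filter, Finset.mem_Icc]
  constructor
  · rintro ⟨⟨h1, h2⟩, hdvd, hndvd⟩
    obtain ⟨c, rfl⟩ := hdvd
    refine ⟨a * c, ⟨⟨?_, ?_⟩, ⟨c, rfl⟩, fun hab => hndvd ?_⟩, by ring⟩
    · by_contra h
      have : a * c = 0 := by omega
      have : m * a * c = 0 := by
        calc m * a * c = m * (a * c) := by ring
        _ = 0 := by rw [this, Nat.mul_zero]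
      omega
    · have hlt : m * (a * c) < m * n' := by
        calc m * (a * c) = m * a * c := by ring
        _ ≤ n - 1 := h2
        _ < n := by omega
        _ = m * n' := hmn.symm
      have : a * c < n' := Nat.lt_of_mul_lt_mul_left hlt
      omega
    · obtain ⟨e, he⟩ := hab
      exact ⟨e, by rw [← hmn] at *; calc m * a * c = m * (a * c) := by ring
        _ = m * (a * b * e) := by rw [he]
        _ = m * a * b * e := by ring⟩
  · rintro ⟨e, ⟨⟨h1, h2⟩, ⟨c, rfl⟩, hndvd⟩, rfl⟩
    refine ⟨⟨?_, ?_⟩, ⟨c, by ring⟩, fun hab => hndvd ?_⟩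
    · have : 1 ≤ m * 1 := by omega
      calc 1 ≤ m * 1 := this
      _ ≤ m * (a * c) := Nat.mul_le_mul_left m (by omega)
    · have hlt : m * (a * c) < m * n' := mul_lt_mul_of_pos_left (by omega) hm
      rw [hmn] at hlt
      omega
    · obtain ⟨e, he⟩ := hab
      refine ⟨e, ?_⟩
      have h' : m * (a * c) = m * (a * b * e) := by rw [he]; ring
      exact Nat.eq_of_mul_eq_mul_left hm h'

end Scaling

section Main

lemma pairedD_one_mem {n m d : ℕ} :
    d ∈ pairedD n 1 m ↔ (d ∈ Finset.Icc 1 (n - 1) ∧ ¬ m ∣ d) := by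
  rw [pairedD, Finset.mem_filter]
  constructor
  · rintro ⟨h1, _, h2⟩
    rw [one_mul] at h2
    exact ⟨h1, h2⟩
  · rintro ⟨h1, h2⟩
    exact ⟨h1, one_dvd d, by rw [one_mul]; exact h2⟩

lemma main_aux : ∀ (n : ℕ), 0 < n → ∀ (D : Finset ℕ), D ⊆ Finset.Icc 1 (n - 1) →
    (∀ d ∈ D, n - d ∈ D) → IsEmpty (SimpleGraph.pathGraph 4 ↪g circulant n D) →
    ∃ (k : ℕ) (a b : Fin k → ℕ),
      (∀ i, 0 < a i) ∧ (∀ i, 0 < b i) ∧ (∀ i, a i * b i ∣ n) ∧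
      D = Finset.univ.biUnion (fun i => pairedD n (a i) (b i)) := by
  intro n
  induction n using Nat.strong_induction_on with
  | _ n IH =>
    intro hn D hD hsym hP4
    classical
    by_cases hD0 : D = ∅
    · refine ⟨0, Fin.elim0, Fin.elim0, fun i => i.elim0, fun i => i.elim0,
        fun i => i.elim0, ?_⟩
      simp [hD0]
    · obtain ⟨d₀, hd₀⟩ := Finset.nonempty_of_ne_empty hD0
      have hIcc₀ := Finset.mem_Icc.mp (hD hd₀)
      have hn2 : 2 ≤ n := by omega
      set g := Nat.gcd (D.gcd id) n with hgdef
      have hgn : g ∣ n := Nat.gcd_dvd_right _ _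
      have hgd : ∀ d ∈ D, g ∣ d := fun d hd =>
        dvd_trans (Nat.gcd_dvd_left _ _) (Finset.gcd_dvd hd)
      have hg0 : 0 < g := Nat.pos_of_dvd_of_pos hgn hn
      rcases Nat.lt_or_ge 1 g with hg | hgle
      · -- g > 1 : scale down by g
        set n' := n / g with hn'def
        have hmn : g * n' = n := Nat.mul_div_cancel' hgn
        have hn' : 0 < n' := Nat.div_pos (Nat.le_of_dvd hn hgn) hg0
        have hn'lt : n' < n := by
          have h' : n' < g * n' := by
            calc n' = 1 * n' := (one_mul n').symm
            _ < g * n' := mul_lt_mul_of_pos_right hg hn'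
          rw [hmn] at h'; exact h'
        set D' := D.image (fun d => d / g) with hD'def
        have hmem' : ∀ t, (g * t ∈ D ↔ t ∈ D') := by
          intro t
          constructor
          · intro h
            exact Finset.mem_image.mpr ⟨g * t, h, by rw [Nat.mul_div_cancel_left _ hg0]⟩
          · intro h
            obtain ⟨d, hd, he⟩ := Finset.mem_image.mp h
            obtain ⟨c, rfl⟩ := hgd d hd
            rw [Nat.mul_div_cancel_left _ hg0] at he
            rw [← he]
            exact hd
        have hD's : D' ⊆ Finset.Icc 1 (n' - 1) := by
          intro e he
          obtain ⟨d, hd, rfl⟩ := Finset.mem_image.mp he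
          obtain ⟨c, rfl⟩ := hgd d hd
          rw [Nat.mul_div_cancel_left _ hg0]
          have hIc := Finset.mem_Icc.mp (hD hd)
          have h1 : 1 ≤ c := by
            rcases Nat.eq_zero_or_pos c with rfl | h
            · rw [Nat.mul_zero] at hIc; omega
            · exact h
          have h2 : c < n' := by
            have hlt : g * c < g * n' := by rw [hmn]; omega
            exact Nat.lt_of_mul_lt_mul_left hlt
          exact Finset.mem_Icc.mpr ⟨h1, by omega⟩
        have hsym' : ∀ e ∈ D', n' - e ∈ D' := by
          intro e he
          obtain ⟨d, hd, rfl⟩ := Finset.mem_image.mp he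
          obtain ⟨c, rfl⟩ := hgd d hd
          rw [Nat.mul_div_cancel_left _ hg0]
          have hnd := hsym _ hd
          have heq : n - g * c = g * (n' - c) := by
            rw [Nat.mul_sub_left_distrib, hmn]
          rw [heq] at hnd
          exact (hmem' _).mp hnd
        have hP4' : IsEmpty (SimpleGraph.pathGraph 4 ↪g circulant n' D') := by
          obtain ⟨emb⟩ := circulant_scale_embedding hn' hg0 hmn D D' (fun t _ => hmem' t)
          exact ⟨fun f => hP4.false (emb.comp f)⟩
        obtain ⟨k, a, b, hpa, hpb, hab, hEq⟩ := IH n' hn'lt hn' D' hD's hsym' hP4'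
        refine ⟨k, fun i => g * a i, b, fun i => Nat.mul_pos hg0 (hpa i), hpb, ?_, ?_⟩
        · intro i
          have he : g * a i * b i = g * (a i * b i) := by ring
          rw [he, ← hmn]
          exact Nat.mul_dvd_mul_left g (hab i)
        · ext d
          constructor
          · intro hd
            obtain ⟨c, rfl⟩ := hgd d hd
            have hc : c ∈ D' := (hmem' c).mp hd
            rw [hEq] at hc
            obtain ⟨i, _, hi⟩ := Finset.mem_biUnion.mp hc
            refine Finset.mem_biUnion.mpr ⟨i, Finset.mem_univ i, ?_⟩
            rw [pairedD_scale hn' hg0 hmn]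
            exact Finset.mem_image.mpr ⟨c, hi, rfl⟩
          · intro hd
            obtain ⟨i, _, hi⟩ := Finset.mem_biUnion.mp hd
            rw [pairedD_scale hn' hg0 hmn] at hi
            obtain ⟨e, he, rfl⟩ := Finset.mem_image.mp hi
            refine (hmem' e).mpr ?_
            rw [hEq]
            exact Finset.mem_biUnion.mpr ⟨i, Finset.mem_univ i, he⟩
      · -- g = 1 : connected case
        have hg1 : Nat.gcd (D.gcd id) n = 1 := by omega
        haveI : NeZero n := ⟨by omega⟩
        have hconn : (circulant n D).Connected := circulant_connected hn hD hg1
        set E := (Finset.Icc 1 (n - 1)) \ D with hEdef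
        have hEsub : E ⊆ Finset.Icc 1 (n - 1) := Finset.sdiff_subset
        set m := Nat.gcd (E.gcd id) n with hmdef
        have hmn' : m ∣ n := Nat.gcd_dvd_right _ _
        have hm0 : 0 < m := Nat.pos_of_dvd_of_pos hmn' hn
        have hmE : ∀ d ∈ E, m ∣ d := fun d hd =>
          dvd_trans (Nat.gcd_dvd_left _ _) (Finset.gcd_dvd hd)
        have hm1 : 1 < m := by
          by_contra hcon
          have hm1' : Nat.gcd (E.gcd id) n = 1 := by omega
          have hconnE : (circulant n E).Connected := circulant_connected hn hEsub hm1'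
          have hcompl : (circulant n D)ᶜ = circulant n E := compl_circulant hn hD hsym
          refine keyLemma n (ZMod n) (circulant n D) ?_ ?_ hP4 hconn ?_
          · rw [ZMod.card]
          · rw [ZMod.card]; omega
          · rw [hcompl]; exact hconnE
        set n'' := n / m with hn''def
        have hmn2 : m * n'' = n := Nat.mul_div_cancel' hmn'
        have hn'' : 0 < n'' := Nat.div_pos (Nat.le_of_dvd hn hmn') hm0
        have hn''lt : n'' < n := by
          have h' : n'' < m * n'' := by
            calc n'' = 1 * n'' := (one_mul _).symm
            _ < m * n'' := mul_lt_mul_of_pos_right hm1 hn''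
          rw [hmn2] at h'; exact h'
        set D₂ := (D.filter (fun d => m ∣ d)).image (fun d => d / m) with hD₂def
        have hmem₂ : ∀ t, (m * t ∈ D ↔ t ∈ D₂) := by
          intro t
          constructor
          · intro h
            exact Finset.mem_image.mpr ⟨m * t, Finset.mem_filter.mpr ⟨h, ⟨t, rfl⟩⟩,
              by rw [Nat.mul_div_cancel_left _ hm0]⟩
          · intro h
            obtain ⟨d, hd, he⟩ := Finset.mem_image.mp h
            obtain ⟨hdD, hdm⟩ := Finset.mem_filter.mp hd
            obtain ⟨c, rfl⟩ := hdm
            rw [Nat.mul_div_cancel_left _ hm0] at he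
            rw [← he]
            exact hdD
        have hsubm : ∀ d ∈ Finset.Icc 1 (n - 1), ¬ m ∣ d → d ∈ D := by
          intro d hIc hnd
          by_contra hdD
          exact hnd (hmE d (Finset.mem_sdiff.mpr ⟨hIc, hdD⟩))
        have hD₂s : D₂ ⊆ Finset.Icc 1 (n'' - 1) := by
          intro e he
          obtain ⟨d, hd, rfl⟩ := Finset.mem_image.mp he
          obtain ⟨hdD, hdm⟩ := Finset.mem_filter.mp hd
          obtain ⟨c, rfl⟩ := hdm
          rw [Nat.mul_div_cancel_left _ hm0]
          have hIc := Finset.mem_Icc.mp (hD hdD)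
          have h1 : 1 ≤ c := by
            rcases Nat.eq_zero_or_pos c with rfl | h
            · rw [Nat.mul_zero] at hIc; omega
            · exact h
          have h2 : c < n'' := by
            have hlt : m * c < m * n'' := by rw [hmn2]; omega
            exact Nat.lt_of_mul_lt_mul_left hlt
          exact Finset.mem_Icc.mpr ⟨h1, by omega⟩
        have hsym₂ : ∀ e ∈ D₂, n'' - e ∈ D₂ := by
          intro e he
          obtain ⟨d, hd, rfl⟩ := Finset.mem_image.mp he
          obtain ⟨hdD, hdm⟩ := Finset.mem_filter.mp hd
          obtain ⟨c, rfl⟩ := hdm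
          rw [Nat.mul_div_cancel_left _ hm0]
          have hnd := hsym _ hdD
          have heq : n - m * c = m * (n'' - c) := by
            rw [Nat.mul_sub_left_distrib, hmn2]
          rw [heq] at hnd
          exact (hmem₂ _).mp hnd
        have hP4₂ : IsEmpty (SimpleGraph.pathGraph 4 ↪g circulant n'' D₂) := by
          obtain ⟨emb⟩ := circulant_scale_embedding hn'' hm0 hmn2 D D₂ (fun t _ => hmem₂ t)
          exact ⟨fun f => hP4.false (emb.comp f)⟩
        obtain ⟨k, a, b, hpa, hpb, hab, hEq⟩ := IH n'' hn''lt hn'' D₂ hD₂s hsym₂ hP4₂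
        refine ⟨k + 1, Fin.cons 1 (fun i => m * a i), Fin.cons m b, ?_, ?_, ?_, ?_⟩
        · intro i
          refine Fin.cases ?_ ?_ i
          · simp
          · intro j
            rw [Fin.cons_succ]
            exact Nat.mul_pos hm0 (hpa j)
        · intro i
          refine Fin.cases ?_ ?_ i
          · rw [Fin.cons_zero]; exact hm0
          · intro j
            rw [Fin.cons_succ]
            exact hpb j
        · intro i
          refine Fin.cases ?_ ?_ i
          · rw [Fin.cons_zero, Fin.cons_zero, one_mul]
            exact hmn'
          · intro j
            rw [Fin.cons_succ, Fin.cons_succ]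
            have he : m * a j * b j = m * (a j * b j) := by ring
            rw [he, ← hmn2]
            exact Nat.mul_dvd_mul_left m (hab j)
        · ext d
          rw [Finset.mem_biUnion]
          constructor
          · intro hd
            by_cases hmd : m ∣ d
            · obtain ⟨c, rfl⟩ := hmd
              have hc : c ∈ D₂ := (hmem₂ c).mp hd
              rw [hEq] at hc
              obtain ⟨i, _, hi⟩ := Finset.mem_biUnion.mp hc
              refine ⟨i.succ, Finset.mem_univ _, ?_⟩
              rw [Fin.cons_succ, Fin.cons_succ, pairedD_scale hn'' hm0 hmn2]
              exact Finset.mem_image.mpr ⟨c, hi, rfl⟩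
            · refine ⟨0, Finset.mem_univ _, ?_⟩
              rw [Fin.cons_zero, Fin.cons_zero]
              exact pairedD_one_mem.mpr ⟨hD hd, hmd⟩
          · rintro ⟨i, _, hi⟩
            revert hi
            refine Fin.cases ?_ ?_ i
            · intro hi
              rw [Fin.cons_zero, Fin.cons_zero] at hi
              obtain ⟨hIc, hnd⟩ := pairedD_one_mem.mp hi
              exact hsubm d hIc hnd
            · intro j hi
              rw [Fin.cons_succ, Fin.cons_succ, pairedD_scale hn'' hm0 hmn2] at hi
              obtain ⟨e, he, rfl⟩ := Finset.mem_image.mp hi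
              refine (hmem₂ e).mpr ?_
              rw [hEq]
              exact Finset.mem_biUnion.mpr ⟨j, Finset.mem_univ j, he⟩

end Main


/-- Every `P₄`-free circulant is paired: it is isomorphic to a `k`-paired
circulant `C(n; a₁,b₁; …; a_k,b_k)` for some `k` and suitable pairs. -/
theorem stmt_18 (n : ℕ) (hn : 0 < n) (D : Finset ℕ) (hD : D ⊆ Finset.Icc 1 (n - 1))
    (hsym : ∀ d ∈ D, n - d ∈ D)
    (hP4 : IsEmpty (SimpleGraph.pathGraph 4 ↪g circulant n D)) :
    ∃ (k : ℕ) (a b : Fin k → ℕ),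
      (∀ i, 0 < a i) ∧ (∀ i, 0 < b i) ∧ (∀ i, a i * b i ∣ n) ∧
      Nonempty (circulant n D ≃g pairedCirculant n a b) := by
  obtain ⟨k, a, b, hpa, hpb, hab, hEq⟩ := main_aux n hn D hD hsym hP4
  refine ⟨k, a, b, hpa, hpb, hab, ?_⟩
  have he : pairedCirculant n a b = circulant n D := by
    rw [pairedCirculant, ← hEq]
  rw [he]
  exact ⟨RelIso.refl _⟩
end
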